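/- Let I be an ideal of a commutative ring R generated by f_1,...,f_s, and suppose x ∈ R satisfies x·f_i^m ∈ I^{n+m} for all i = 1,...,s and some fixed m ≥ 0. Then x ∈ I^{n+sm} : I^{sm}. -/

import Mathlib

open Pointwise

open Finset in
lemma prod_mem_pow_card_aux {R : Type*} [CommRing R] {I : Ideal R} {α : Type*}
    (t : Finset α) (g : α → R) (hg : ∀ j ∈ t, g j ∈ I) :
    ∏ j ∈ t, g j ∈ I ^ t.card := by
  classical
  induction t using Finset.induction with
  | empty => simp
  | @insert a t' hx ih =>
    rw [Finset.prod_insert hx, Finset.card_insert_of_notMem hx, pow_succ']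
    exact Ideal.mul_mem_mul (hg a (Finset.mem_insert_self a t'))
      (ih fun j hj => hg j (Finset.mem_insert_of_mem hj))

/-- If `I = (f_1,…,f_s)` and `x·f_i^m ∈ I^{n+m}` for all `i`, then
`x ∈ I^{n+sm} : I^{sm}`. -/
theorem stmt_5 {R : Type*} [CommRing R] {s : ℕ} (hs : 1 ≤ s) (f : Fin s → R)
    (n m : ℕ) (x : R)
    (h : ∀ i, x * f i ^ m ∈ (Ideal.span (Set.range f)) ^ (n + m)) :
    x ∈ Submodule.colon ((Ideal.span (Set.range f)) ^ (n + s * m))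
      (((Ideal.span (Set.range f)) ^ (s * m) : Ideal R) : Set R) := by
  classical
  set I := Ideal.span (Set.range f) with hI
  rw [Submodule.mem_colon]
  intro y hy
  -- reduce to generators of I^(s*m)
  have hspan : I ^ (s * m) = Ideal.span ((Set.range f) ^ (s * m)) := by
    exact Submodule.span_pow _ _
  rw [hspan] at hy
  have key : ∀ y ∈ (Set.range f) ^ (s * m), x * y ∈ I ^ (n + s * m) := by
    intro y hy
    rw [Set.mem_pow] at hy
    obtain ⟨g, hg⟩ := hy
    -- choose indices
    choose e he using fun j => (g j).2
    have hy' : y = ∏ j : Fin (s * m), f (e j) := by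
      rw [← hg, List.prod_ofFn]
      exact Finset.prod_congr rfl fun j _ => (he j).symm
    -- pigeonhole
    obtain ⟨i, -, hi⟩ := Finset.exists_le_card_fiber_of_mul_le_card_of_maps_to
      (s := (Finset.univ : Finset (Fin (s * m)))) (t := (Finset.univ : Finset (Fin s)))
      (f := e) (n := m) (fun a _ => Finset.mem_univ (e a))
      (Finset.univ_nonempty_iff.mpr ⟨⟨0, hs⟩⟩)
      (by simp [Finset.card_univ])
    set T := Finset.univ.filter (fun j => e j = i) with hT
    have hsplit : (∏ j : Fin (s * m), f (e j)) =
        (∏ j ∈ T, f (e j)) * ∏ j ∈ Finset.univ.filter (fun j => ¬ e j = i), f (e j) :=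
      (Finset.prod_filter_mul_prod_filter_not _ _ _).symm
    have hTprod : ∏ j ∈ T, f (e j) = f i ^ T.card := by
      rw [Finset.prod_congr rfl (fun j hj => by
        rw [(Finset.mem_filter.mp hj).2]), Finset.prod_const]
    have hcard : T.card + (Finset.univ.filter (fun j => ¬ e j = i)).card = s * m := by
      rw [Finset.card_filter_add_card_filter_not, Finset.card_univ, Fintype.card_fin]
    have hfi : f i ∈ I := Ideal.subset_span (Set.mem_range_self i)
    have hmem2 : f i ^ (T.card - m) * ∏ j ∈ Finset.univ.filter (fun j => ¬ e j = i), f (e j)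
        ∈ I ^ ((T.card - m) + (Finset.univ.filter (fun j => ¬ e j = i)).card) := by
      rw [pow_add]
      exact Ideal.mul_mem_mul (Ideal.pow_mem_pow hfi _)
        (prod_mem_pow_card_aux _ _ fun j _ => Ideal.subset_span (Set.mem_range_self (e j)))
    have heq : x * y = (x * f i ^ m) *
        (f i ^ (T.card - m) * ∏ j ∈ Finset.univ.filter (fun j => ¬ e j = i), f (e j)) := by
      rw [hy', hsplit, hTprod]
      have : f i ^ T.card = f i ^ m * f i ^ (T.card - m) := by
        rw [← pow_add, Nat.add_sub_cancel' hi]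
      rw [this]; ring
    rw [heq]
    have : (n + m) + ((T.card - m) + (Finset.univ.filter (fun j => ¬ e j = i)).card)
        = n + s * m := by omega
    rw [← this, pow_add]
    exact Ideal.mul_mem_mul (h i) hmem2
  -- span induction
  induction hy using Submodule.span_induction with
  | mem y hy => simpa [smul_eq_mul, mul_comm] using key y hy
  | zero => simp
  | add a b _ _ ha hb => simpa [mul_add] using add_mem ha hb
  | smul r a _ ha =>
    rw [smul_eq_mul, smul_eq_mul, mul_left_comm]
    exact Ideal.mul_mem_left _ r ha
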